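/- Let μ be a regular probability measure on Γ_Λ (Λ compact) and ν a probability measure on Γ_X with μ(η(Λ)=n) = ν(ω(X)=n) for all n ≥ 0, and suppose Σ_{n≥1} T_c(μ_n, ν_n)² · μ(η(Λ)=n) < ∞, where μ_n = μ(· | η(Λ)=n), ν_n = ν(· | ω(X)=n). Then the Monge–Kantorovitch cost for the configuration cost c satisfies T_c(μ,ν)² = Σ_{n≥1} T_c(μ_n, ν_n)² μ(η(Λ)=n). -/

import Mathlib

open MeasureTheory ENNReal ProbabilityTheory

noncomputable section

variable {k : ℕ}

def IsCoupling {X Y : Type*} [MeasurableSpace X] [MeasurableSpace Y]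
    (μ : Measure X) (ν : Measure Y) (γ : Measure (X × Y)) : Prop :=
  γ.map Prod.fst = μ ∧ γ.map Prod.snd = ν

noncomputable def MKCost {X Y : Type*} [MeasurableSpace X] [MeasurableSpace Y]
    (c : X × Y → ℝ≥0∞) (μ : Measure X) (ν : Measure Y) : ℝ≥0∞ :=
  ⨅ γ ∈ {γ : Measure (X × Y) | IsCoupling μ ν γ}, ∫⁻ p, c p ∂γ

def IsConfiguration {X : Type*} [MeasurableSpace X] (η : Measure X) : Prop :=
  ∃ D : Set X, D.Countable ∧ η = Measure.sum (fun x : D => Measure.dirac (x : X))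

noncomputable def configCost
    (η₁ η₂ : Measure (EuclideanSpace ℝ (Fin k))) : ℝ≥0∞ :=
  ⨅ β ∈ {β : Measure (EuclideanSpace ℝ (Fin k) × EuclideanSpace ℝ (Fin k)) |
      β.map Prod.fst = η₁ ∧ β.map Prod.snd = η₂ ∧ IsConfiguration β},
    ∫⁻ p, ENNReal.ofReal (‖p.1 - p.2‖ ^ 2 / 2) ∂β

/-- The set of configurations with exactly `n` points. -/
def nPoints (k n : ℕ) : Set (Measure (EuclideanSpace ℝ (Fin k))) :=
  {η | η Set.univ = (n : ℝ≥0∞)}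

/-- `μ` is regular: for each `n`, the conditional law given `n` points is the image under
`(x₁,…,xₙ) ↦ Σᵢ ε_{xᵢ}` of a symmetric measure on `n`-tuples which is absolutely continuous
with respect to Lebesgue measure. -/
def IsRegularConfigMeasure (μ : Measure (Measure (EuclideanSpace ℝ (Fin k)))) : Prop :=
  ∀ n : ℕ, 1 ≤ n → μ (nPoints k n) ≠ 0 →
    ∃ m : Measure (Fin n → EuclideanSpace ℝ (Fin k)),
      m ≪ volume ∧ (∀ σ : Equiv.Perm (Fin n), m.map (fun x i => x (σ i)) = m) ∧
      μ[|nPoints k n] = m.map (fun x => ∑ i, Measure.dirac (x i))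

/-! ### Auxiliary lemmas -/

lemma measurableSet_nPoints (k n : ℕ) : MeasurableSet (nPoints k n) :=
  measurableSet_preimage (Measure.measurable_coe MeasurableSet.univ)
    (measurableSet_singleton _)

lemma nPoints_pairwise_disjoint (k : ℕ) :
    Pairwise (Function.onFun Disjoint (fun n => nPoints k n)) := by
  intro n m hnm
  refine Set.disjoint_left.2 fun η h1 h2 => hnm ?_
  exact_mod_cast (h1.symm.trans h2 : ((n : ℝ≥0∞)) = m)

lemma configCost_eq_top {η ω : Measure (EuclideanSpace ℝ (Fin k))}
    (h : η Set.univ ≠ ω Set.univ) : configCost η ω = ⊤ := by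
  refine le_antisymm le_top (le_iInf₂ fun β hβ => absurd ?_ h)
  obtain ⟨h1, h2, -⟩ := hβ
  rw [← h1, ← h2, Measure.map_apply measurable_fst MeasurableSet.univ,
    Measure.map_apply measurable_snd MeasurableSet.univ]
  simp

lemma isConfiguration_zero {X : Type*} [MeasurableSpace X] :
    IsConfiguration (0 : Measure X) := by
  refine ⟨∅, Set.countable_empty, Measure.ext fun s hs => ?_⟩
  rw [Measure.sum_apply _ hs]
  simp

lemma configCost_zero_zero :
    configCost (0 : Measure (EuclideanSpace ℝ (Fin k))) 0 = 0 := by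
  refine le_antisymm ?_ zero_le
  have h0 : (0 : Measure (EuclideanSpace ℝ (Fin k) × EuclideanSpace ℝ (Fin k))) ∈
      {β : Measure (EuclideanSpace ℝ (Fin k) × EuclideanSpace ℝ (Fin k)) |
        β.map Prod.fst = 0 ∧ β.map Prod.snd = 0 ∧ IsConfiguration β} :=
    ⟨by simp, by simp, isConfiguration_zero⟩
  have := iInf₂_le (f := fun β _ =>
    ∫⁻ p, ENNReal.ofReal (‖p.1 - p.2‖ ^ 2 / 2) ∂β) 0 h0
  simpa [configCost] using this

lemma mass_nat {X : Type*} [MeasurableSpace X] {η : Measure X}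
    (hc : IsConfiguration η) (hfin : η Set.univ ≠ ⊤) : ∃ n : ℕ, η Set.univ = (n : ℝ≥0∞) := by
  obtain ⟨D, hDc, rfl⟩ := hc
  rw [Measure.sum_apply _ MeasurableSet.univ]
  by_cases hD : D.Finite
  · haveI := hD.fintype
    refine ⟨Fintype.card D, ?_⟩
    simp [tsum_fintype]
  · exfalso
    apply hfin
    rw [Measure.sum_apply _ MeasurableSet.univ]
    haveI : Infinite D := Set.infinite_coe_iff.2 hD
    have h1 : ∀ x : D, Measure.dirac (x : X) Set.univ = 1 := fun x => by simp
    rw [tsum_congr h1]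
    exact ENNReal.tsum_const_eq_top_of_ne_zero one_ne_zero

lemma smul_cond {X : Type*} [MeasurableSpace X] (ρ : Measure X) (s : Set X)
    (hfin : ρ s ≠ ⊤) : ρ s • ρ[|s] = ρ.restrict s := by
  show ρ s • ((ρ s)⁻¹ • ρ.restrict s) = ρ.restrict s
  by_cases h0 : ρ s = 0
  · rw [h0, Measure.restrict_eq_zero.2 h0]
    simp
  · rw [smul_smul, ENNReal.mul_inv_cancel h0 hfin, one_smul]

lemma cond_of_zero_mass {X : Type*} [MeasurableSpace X] {ρ : Measure X} {s : Set X}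
    (h0 : ρ s = 0) : ρ[|s] = 0 := by
  show (ρ s)⁻¹ • ρ.restrict s = 0
  rw [Measure.restrict_eq_zero.2 h0, smul_zero]

lemma measure_sum_shift {X : Type*} [MeasurableSpace X] (f : ℕ → Measure X) :
    f 0 + Measure.sum (fun m => f (m + 1)) = Measure.sum f := by
  refine Measure.ext fun s hs => ?_
  rw [Measure.sum_apply _ hs, Measure.add_apply, Measure.sum_apply _ hs]
  exact (tsum_eq_zero_add' (f := fun i => (f i) s) ENNReal.summable).symm

lemma measure_decomp {k : ℕ} (ρ : Measure (Measure (EuclideanSpace ℝ (Fin k))))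
    (hae : ∀ᵐ η ∂ρ, ∃ n : ℕ, η Set.univ = (n : ℝ≥0∞)) :
    Measure.sum (fun n => ρ.restrict (nPoints k n)) = ρ := by
  rw [← Measure.restrict_iUnion (nPoints_pairwise_disjoint k)
    (fun n => measurableSet_nPoints k n)]
  refine Measure.restrict_eq_self_of_ae_mem ?_
  filter_upwards [hae] with η hη
  obtain ⟨n, hn⟩ := hη
  exact Set.mem_iUnion.2 ⟨n, hn⟩

lemma nPoints_zero_eq (k : ℕ) : nPoints k 0 = {(0 : Measure (EuclideanSpace ℝ (Fin k)))} := by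
  ext η
  simp only [nPoints, Set.mem_setOf_eq, Nat.cast_zero, Set.mem_singleton_iff]
  exact Measure.measure_univ_eq_zero

/-- Decomposition of the Monge–Kantorovitch cost between a regular finite point process on a
compact `Λ` and a finite point process `ν` with the same distribution of the number of points:
`T_c(μ,ν)² = Σ_{n≥1} T_c(μₙ,νₙ)² μ(η(Λ)=n)`. -/
theorem transport_cost_decomposition
    (Λ : Set (EuclideanSpace ℝ (Fin k))) (hΛ : IsCompact Λ)
    (μ ν : Measure (Measure (EuclideanSpace ℝ (Fin k))))
    [IsProbabilityMeasure μ] [IsProbabilityMeasure ν]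
    (hμconf : ∀ᵐ η ∂μ, IsConfiguration η ∧ η Λᶜ = 0 ∧ η Set.univ ≠ ⊤)
    (hνconf : ∀ᵐ ω ∂ν, IsConfiguration ω ∧ ω Set.univ ≠ ⊤)
    (hreg : IsRegularConfigMeasure μ)
    (hcount : ∀ n : ℕ, μ (nPoints k n) = ν (nPoints k n))
    (hsum : ∑' m : ℕ,
        MKCost (fun p => configCost p.1 p.2) (μ[|nPoints k (m + 1)]) (ν[|nPoints k (m + 1)]) *
          μ (nPoints k (m + 1)) ≠ ⊤) :
    MKCost (fun p => configCost p.1 p.2) μ ν =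
      ∑' m : ℕ,
        MKCost (fun p => configCost p.1 p.2) (μ[|nPoints k (m + 1)]) (ν[|nPoints k (m + 1)]) *
          μ (nPoints k (m + 1)) := by
  classical
  set M := Measure (EuclideanSpace ℝ (Fin k))
  set c : M × M → ℝ≥0∞ := fun p => configCost p.1 p.2 with hc
  set A : ℕ → Set M := fun n => nPoints k n with hA
  have hAmeas : ∀ n, MeasurableSet (A n) := fun n => measurableSet_nPoints k n
  have hA0 : A 0 = {(0 : M)} := nPoints_zero_eq k
  have hμfin : ∀ n, μ (A n) ≠ ⊤ := fun n => measure_ne_top μ _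
  have hνfin : ∀ n, ν (A n) ≠ ⊤ := fun n => measure_ne_top ν _
  -- a.e. statements about masses
  have hμn : ∀ᵐ η ∂μ, ∃ n : ℕ, η Set.univ = (n : ℝ≥0∞) := by
    filter_upwards [hμconf] with η hη using mass_nat hη.1 hη.2.2
  have hνn : ∀ᵐ ω ∂ν, ∃ n : ℕ, ω Set.univ = (n : ℝ≥0∞) := by
    filter_upwards [hνconf] with ω hω using mass_nat hω.1 hω.2
  have hμdec := measure_decomp μ hμn
  have hνdec := measure_decomp ν hνn
  refine le_antisymm ?hle ?hge
  case hge =>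
    -- lower bound for the cost of any coupling
    refine le_iInf₂ fun γ hγ => ?_
    set E : Set (M × M) := {p | ¬ p.1 Set.univ = p.2 Set.univ} with hE
    have hEmeas : MeasurableSet E := by
      have h1 : Measurable fun p : M × M => p.1 Set.univ :=
        (Measure.measurable_coe MeasurableSet.univ).comp measurable_fst
      have h2 : Measurable fun p : M × M => p.2 Set.univ :=
        (Measure.measurable_coe MeasurableSet.univ).comp measurable_snd
      exact (measurableSet_eq_fun h1 h2).compl
    have hcE : ∀ p ∈ E, c p = ⊤ := fun p hp => configCost_eq_top hp
    by_cases hEnull : γ E = 0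
    · -- the diagonal pieces
      set D : ℕ → Set (M × M) := fun n => A n ×ˢ A n with hD
      have hDmeas : ∀ n, MeasurableSet (D n) := fun n => (hAmeas n).prod (hAmeas n)
      have hDdisj : Pairwise (Function.onFun Disjoint D) := by
        intro n m hnm
        refine Set.disjoint_left.2 fun p h1 h2 => ?_
        exact Set.disjoint_left.1 (nPoints_pairwise_disjoint k hnm) h1.1 h2.1
      -- marginals of the restricted coupling
      have hmapf : ∀ n, (γ.restrict (D n)).map Prod.fst = μ.restrict (A n) := by
        intro n
        have hset : D n =ᵐ[γ] (Prod.fst ⁻¹' A n) := by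
          rw [Filter.eventuallyEq_set]
          refine Filter.eventually_of_mem (U := {p | p ∈ D n ↔ p ∈ Prod.fst ⁻¹' A n}) (by
            rw [mem_ae_iff]
            refine measure_mono_null ?_ hEnull
            intro p hp
            simp only [Set.mem_compl_iff, Set.mem_setOf_eq] at hp ⊢
            intro hpE
            apply hp
            constructor
            · intro hpD; exact hpD.1
            · intro hp1
              refine ⟨hp1, ?_⟩
              have hp1' : p.1 Set.univ = (n : ℝ≥0∞) := hp1
              show p.2 Set.univ = (n : ℝ≥0∞)
              rw [← hpE]
              exact hp1') (fun p hp => hp)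
        rw [Measure.restrict_congr_set hset,
          ← Measure.restrict_map measurable_fst (hAmeas n), hγ.1]
      have hmaps : ∀ n, (γ.restrict (D n)).map Prod.snd = ν.restrict (A n) := by
        intro n
        have hset : D n =ᵐ[γ] (Prod.snd ⁻¹' A n) := by
          rw [Filter.eventuallyEq_set]
          refine Filter.eventually_of_mem (U := {p | p ∈ D n ↔ p ∈ Prod.snd ⁻¹' A n}) (by
            rw [mem_ae_iff]
            refine measure_mono_null ?_ hEnull
            intro p hp
            simp only [Set.mem_compl_iff, Set.mem_setOf_eq] at hp ⊢
            intro hpE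
            apply hp
            constructor
            · intro hpD; exact hpD.2
            · intro hp2
              refine ⟨?_, hp2⟩
              have hp2' : p.2 Set.univ = (n : ℝ≥0∞) := hp2
              show p.1 Set.univ = (n : ℝ≥0∞)
              rw [hpE]
              exact hp2') (fun p hp => hp)
        rw [Measure.restrict_congr_set hset,
          ← Measure.restrict_map measurable_snd (hAmeas n), hγ.2]
      -- per level estimate
      have key : ∀ m : ℕ,
          MKCost c (μ[|A (m + 1)]) (ν[|A (m + 1)]) * μ (A (m + 1)) ≤
            ∫⁻ p, c p ∂(γ.restrict (D (m + 1))) := by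
        intro m
        set n := m + 1
        by_cases h0 : μ (A n) = 0
        · simp [h0]
        · set γn := (μ (A n))⁻¹ • γ.restrict (D n) with hγn
          have hcoup : IsCoupling (μ[|A n]) (ν[|A n]) γn := by
            constructor
            · rw [hγn, Measure.map_smul, hmapf n]; rfl
            · rw [hγn, Measure.map_smul, hmaps n]
              show _ = (ν (A n))⁻¹ • ν.restrict (A n)
              rw [hcount n]
          have h1 : MKCost c (μ[|A n]) (ν[|A n]) ≤ ∫⁻ p, c p ∂γn :=
            iInf₂_le γn hcoup
          rw [hγn, lintegral_smul_measure] at h1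
          calc MKCost c (μ[|A n]) (ν[|A n]) * μ (A n)
              ≤ (μ (A n))⁻¹ * (∫⁻ p, c p ∂(γ.restrict (D n))) * μ (A n) :=
                mul_le_mul_left h1 _
            _ = ∫⁻ p, c p ∂(γ.restrict (D n)) := by
                rw [mul_comm ((μ (A n))⁻¹) _, mul_assoc,
                  ENNReal.inv_mul_cancel h0 (hμfin n), mul_one]
      calc ∑' m : ℕ, MKCost c (μ[|A (m + 1)]) (ν[|A (m + 1)]) * μ (A (m + 1))
          ≤ ∑' m : ℕ, ∫⁻ p, c p ∂(γ.restrict (D (m + 1))) := ENNReal.tsum_le_tsum key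
        _ ≤ ∑' n : ℕ, ∫⁻ p, c p ∂(γ.restrict (D n)) :=
            Summable.tsum_le_tsum_of_inj Nat.succ Nat.succ_injective (fun _ _ => zero_le)
              (fun _ => le_rfl) ENNReal.summable ENNReal.summable
        _ = ∫⁻ p, c p ∂(Measure.sum fun n => γ.restrict (D n)) :=
            (lintegral_sum_measure _ _).symm
        _ = ∫⁻ p, c p ∂(γ.restrict (⋃ n, D n)) := by
            rw [Measure.restrict_iUnion hDdisj hDmeas]
        _ ≤ ∫⁻ p, c p ∂γ := lintegral_mono' Measure.restrict_le_self le_rfl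
    · -- off-diagonal mass gives infinite cost
      have htop : ∫⁻ p, c p ∂γ = ⊤ := by
        refine top_le_iff.1 ?_
        have h1 : ∫⁻ p, E.indicator (fun _ => (⊤ : ℝ≥0∞)) p ∂γ ≤ ∫⁻ p, c p ∂γ := by
          refine lintegral_mono fun p => ?_
          by_cases hp : p ∈ E
          · rw [Set.indicator_of_mem hp, hcE p hp]
          · rw [Set.indicator_of_notMem hp]; exact zero_le
        rw [lintegral_indicator hEmeas, setLIntegral_const, ENNReal.top_mul hEnull] at h1
        exact h1
      rw [htop]
      exact le_top
  case hle =>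
    refine ENNReal.le_of_forall_pos_le_add fun ε hε hfin => ?_
    have hεne : (ε : ℝ≥0∞) ≠ 0 := by exact_mod_cast hε.ne'
    -- choose near-optimal couplings for each level
    have hterm : ∀ m : ℕ, ∃ γ' : Measure (M × M),
        IsCoupling (μ[|A (m + 1)]) (ν[|A (m + 1)]) γ' ∧
          μ (A (m + 1)) * ∫⁻ p, c p ∂γ' ≤
            MKCost c (μ[|A (m + 1)]) (ν[|A (m + 1)]) * μ (A (m + 1)) +
              (ε : ℝ≥0∞) * 2⁻¹ ^ (m + 1) := by
      intro m
      set n := m + 1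
      by_cases h0 : μ (A n) = 0
      · refine ⟨0, ?_, ?_⟩
        · constructor
          · rw [Measure.map_zero, cond_of_zero_mass h0]
          · rw [Measure.map_zero, cond_of_zero_mass (by rw [← hcount n]; exact h0)]
        · rw [h0, zero_mul]; exact zero_le
      · have htermne : MKCost c (μ[|A n]) (ν[|A n]) * μ (A n) ≠ ⊤ :=
          ne_top_of_le_ne_top hsum (ENNReal.le_tsum m)
        have hMKne : MKCost c (μ[|A n]) (ν[|A n]) ≠ ⊤ := by
          intro h
          rw [h, ENNReal.top_mul h0] at htermne
          exact htermne rfl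
        set δ := (ε : ℝ≥0∞) * 2⁻¹ ^ n / μ (A n) with hδ
        have hδ0 : δ ≠ 0 := by
          refine (ENNReal.div_pos ?_ (hμfin n)).ne'
          exact mul_ne_zero hεne (pow_ne_zero _ (ENNReal.inv_ne_zero.2 ENNReal.ofNat_ne_top))
        have hlt : MKCost c (μ[|A n]) (ν[|A n]) < MKCost c (μ[|A n]) (ν[|A n]) + δ :=
          ENNReal.lt_add_right hMKne hδ0
        have hex : ∃ γ' ∈ {γ' : Measure (M × M) | IsCoupling (μ[|A n]) (ν[|A n]) γ'},
            ∫⁻ p, c p ∂γ' < MKCost c (μ[|A n]) (ν[|A n]) + δ := by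
          have h2 : MKCost c (μ[|A n]) (ν[|A n]) <
              MKCost c (μ[|A n]) (ν[|A n]) + δ := hlt
          rw [MKCost] at h2
          simpa [iInf_lt_iff, MKCost] using h2
        obtain ⟨γ', hγ'mem, hγ'lt⟩ := hex
        refine ⟨γ', hγ'mem, ?_⟩
        calc μ (A n) * ∫⁻ p, c p ∂γ'
            ≤ μ (A n) * (MKCost c (μ[|A n]) (ν[|A n]) + δ) :=
              mul_le_mul_right hγ'lt.le _
          _ = μ (A n) * MKCost c (μ[|A n]) (ν[|A n]) + μ (A n) * δ := by
              rw [mul_add]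
          _ = MKCost c (μ[|A n]) (ν[|A n]) * μ (A n) + (ε : ℝ≥0∞) * 2⁻¹ ^ n := by
              rw [mul_comm (μ (A n)), hδ, mul_comm (μ (A n)),
                ENNReal.div_mul_cancel h0 (hμfin n)]
    choose γ' hγ'coup hγ'cost using hterm
    -- the glued coupling
    set γ : Measure (M × M) :=
      μ {(0 : M)} • Measure.dirac ((0 : M), (0 : M)) +
        Measure.sum (fun m => μ (A (m + 1)) • γ' m) with hγdef
    have hγcoup : IsCoupling μ ν γ := by
      constructor
      · rw [hγdef, Measure.map_add _ _ measurable_fst,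
          Measure.map_smul, Measure.map_dirac' measurable_fst,
          Measure.map_sum measurable_fst.aemeasurable]
        have h1 : μ {(0 : M)} • Measure.dirac (((0 : M), (0 : M)) : M × M).1 =
            μ.restrict (A 0) := by
          show μ {(0 : M)} • Measure.dirac (0 : M) = μ.restrict (A 0)
          rw [hA0, Measure.restrict_singleton]
        have h2 : (fun m : ℕ => (μ (A (m + 1)) • γ' m).map Prod.fst) =
            fun m : ℕ => μ.restrict (A (m + 1)) :=
          funext fun m => by
            rw [Measure.map_smul, (hγ'coup m).1, smul_cond μ _ (hμfin (m + 1))]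
        rw [h2, h1]
        exact (measure_sum_shift (fun n => μ.restrict (A n))).trans hμdec
      · rw [hγdef, Measure.map_add _ _ measurable_snd,
          Measure.map_smul, Measure.map_dirac' measurable_snd,
          Measure.map_sum measurable_snd.aemeasurable]
        have hμν0 : μ {(0 : M)} = ν {(0 : M)} := by
          have := hcount 0
          rwa [show nPoints k 0 = {(0 : M)} from nPoints_zero_eq k] at this
        have h1 : μ {(0 : M)} • Measure.dirac (((0 : M), (0 : M)) : M × M).2 =
            ν.restrict (A 0) := by
          show μ {(0 : M)} • Measure.dirac (0 : M) = ν.restrict (A 0)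
          rw [hμν0, hA0, Measure.restrict_singleton]
        have h2 : (fun m : ℕ => (μ (A (m + 1)) • γ' m).map Prod.snd) =
            fun m : ℕ => ν.restrict (A (m + 1)) :=
          funext fun m => by
            rw [Measure.map_smul, (hγ'coup m).2, hcount (m + 1),
              smul_cond ν _ (hνfin (m + 1))]
        rw [h2, h1]
        exact (measure_sum_shift (fun n => ν.restrict (A n))).trans hνdec
    -- cost of the glued coupling
    have hdirac : ∫⁻ p, c p ∂(Measure.dirac ((0 : M), (0 : M))) = 0 := by
      have h00 : MeasurableSet {(0 : M)} := by
        rw [← nPoints_zero_eq k]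
        exact measurableSet_nPoints k 0
      have hmeas0 : MeasurableSet {((0 : M), (0 : M))} := by
        rw [← Set.singleton_prod_singleton]
        exact h00.prod h00
      have hae : c =ᵐ[Measure.dirac ((0 : M), (0 : M))] fun _ => 0 := by
        rw [Filter.EventuallyEq, Filter.eventually_iff, mem_ae_iff]
        refine measure_mono_null (t := {((0 : M), (0 : M))}ᶜ) ?_ ?_
        · intro p hp
          simp only [Set.mem_compl_iff, Set.mem_setOf_eq, Set.mem_singleton_iff] at hp ⊢
          intro h
          apply hp
          rw [h]
          exact configCost_zero_zero
        · rw [Measure.dirac_apply' _ hmeas0.compl]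
          simp
      rw [lintegral_congr_ae hae, lintegral_zero]
    have hcost : ∫⁻ p, c p ∂γ ≤
        (∑' m : ℕ, MKCost c (μ[|A (m + 1)]) (ν[|A (m + 1)]) * μ (A (m + 1))) + ε := by
      rw [hγdef, lintegral_add_measure, lintegral_smul_measure, hdirac, smul_zero,
        zero_add, lintegral_sum_measure]
      calc ∑' m : ℕ, ∫⁻ p, c p ∂(μ (A (m + 1)) • γ' m)
          = ∑' m : ℕ, μ (A (m + 1)) * ∫⁻ p, c p ∂(γ' m) := by
            exact tsum_congr fun m => lintegral_smul_measure _ _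
        _ ≤ ∑' m : ℕ, (MKCost c (μ[|A (m + 1)]) (ν[|A (m + 1)]) * μ (A (m + 1)) +
              (ε : ℝ≥0∞) * 2⁻¹ ^ (m + 1)) := ENNReal.tsum_le_tsum hγ'cost
        _ = (∑' m : ℕ, MKCost c (μ[|A (m + 1)]) (ν[|A (m + 1)]) * μ (A (m + 1))) +
              ∑' m : ℕ, (ε : ℝ≥0∞) * 2⁻¹ ^ (m + 1) := ENNReal.tsum_add
        _ = (∑' m : ℕ, MKCost c (μ[|A (m + 1)]) (ν[|A (m + 1)]) * μ (A (m + 1))) + ε := by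
            congr 1
            rw [ENNReal.tsum_mul_left]
            have : ∑' m : ℕ, (2 : ℝ≥0∞)⁻¹ ^ (m + 1) = 1 := by
              simp only [pow_succ, ENNReal.tsum_mul_right]
              rw [ENNReal.tsum_geometric, ENNReal.one_sub_inv_two, inv_inv]
              exact ENNReal.mul_inv_cancel two_ne_zero ENNReal.ofNat_ne_top
            rw [this, mul_one]
    exact le_trans (iInf₂_le γ hγcoup) hcost

end
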